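/- Let H ∈ (1/2,1) and T > 0. Then sup_{0 < s < t ≤ T} φ(s,t) / (s^{2H−1} (t−s)) < ∞, where φ(s,t) := (1/2)(t^{2H} − s^{2H} − (t−s)^{2H}). -/

import Mathlib

open Real Set

noncomputable section

/-- `φ(s,t) = (1/2)(t^{2H} − s^{2H} − (t−s)^{2H})`. -/
def phiFn (H s t : ℝ) : ℝ := (t ^ (2*H) - s ^ (2*H) - (t - s) ^ (2*H)) / 2

end

/-- Subadditivity of `x ↦ x^p` on nonnegatives for `0 ≤ p ≤ 1`. -/
lemma rpow_subadd {x y p : ℝ} (hx : 0 ≤ x) (hy : 0 ≤ y) (hp : 0 ≤ p) (hp1 : p ≤ 1) :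
    (x + y) ^ p ≤ x ^ p + y ^ p := by
  have h := NNReal.rpow_add_le_add_rpow x.toNNReal y.toNNReal hp hp1
  have := congrArg (fun z : NNReal => (z : ℝ)) (rfl : (x.toNNReal + y.toNNReal) = (x.toNNReal + y.toNNReal))
  have hcoe : ((x.toNNReal + y.toNNReal : NNReal) : ℝ) = x + y := by
    simp [Real.toNNReal_of_nonneg hx, Real.toNNReal_of_nonneg hy]
  calc (x + y) ^ p = (((x.toNNReal + y.toNNReal : NNReal) : ℝ)) ^ p := by rw [hcoe]
    _ = (((x.toNNReal + y.toNNReal) ^ p : NNReal) : ℝ) := by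
        rw [← NNReal.coe_rpow]
    _ ≤ ((x.toNNReal ^ p + y.toNNReal ^ p : NNReal) : ℝ) := by exact_mod_cast h
    _ = x ^ p + y ^ p := by
        push_cast [NNReal.coe_rpow, Real.coe_toNNReal _ hx, Real.coe_toNNReal _ hy]
        ring

/-- Key inequality: for `1 ≤ a ≤ 2`, `0 < s ≤ t`,
`t^a - s^a - (t-s)^a ≤ a s^{a-1} (t-s)`. -/
lemma key_ineq {a s t : ℝ} (ha1 : 1 ≤ a) (ha2 : a ≤ 2) (hs : 0 < s) (hst : s ≤ t) :
    t ^ a - s ^ a - (t - s) ^ a ≤ a * s ^ (a - 1) * (t - s) := by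
  set g : ℝ → ℝ := fun u => a * s ^ (a - 1) * (u - s) + s ^ a + (u - s) ^ a - u ^ a with hg
  have ha0 : (0:ℝ) < a := lt_of_lt_of_le one_pos ha1
  have hcont : ContinuousOn g (Ici s) := by
    apply ContinuousOn.sub
    · apply ContinuousOn.add
      · fun_prop
      · exact ((Real.continuous_rpow_const ha0.le).comp (continuous_id.sub continuous_const)).continuousOn
    · exact (Real.continuous_rpow_const ha0.le).continuousOn
  have hderiv : ∀ u ∈ Ioi s, HasDerivAt g
      (a * s ^ (a - 1) + a * (u - s) ^ (a - 1) - a * u ^ (a - 1)) u := by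
    intro u hu
    have hu' : s < u := hu
    have h1 : HasDerivAt (fun x : ℝ => x ^ a) (a * u ^ (a - 1)) u :=
      Real.hasDerivAt_rpow_const (Or.inl (ne_of_gt (lt_trans hs hu')))
    have h2 : HasDerivAt (fun x : ℝ => (x - s) ^ a) (a * (u - s) ^ (a - 1)) u := by
      have := (Real.hasDerivAt_rpow_const (p := a)
        (x := u - s) (Or.inl (sub_pos.mpr hu').ne')).comp u
        ((hasDerivAt_id u).sub_const s)
      simpa using (mul_one (a * (u - s) ^ (a - 1))) ▸ this
    have h4 : HasDerivAt (fun x : ℝ => a * s ^ (a-1) * (x - s)) (a * s ^ (a-1)) u := by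
      simpa using ((hasDerivAt_id u).sub_const s).const_mul (a * s ^ (a-1))
    exact ((h4.add_const (s ^ a)).add h2).sub h1
  have hmono : MonotoneOn g (Ici s) := by
    apply monotoneOn_of_deriv_nonneg (convex_Ici s) hcont
    · intro u hu
      rw [interior_Ici] at hu
      exact (hderiv u hu).differentiableAt.differentiableWithinAt
    · intro u hu
      rw [interior_Ici] at hu
      have hu' : s < u := hu
      rw [(hderiv u hu).deriv]
      have hsub : u ^ (a - 1) ≤ s ^ (a - 1) + (u - s) ^ (a - 1) := by
        have := rpow_subadd (x := s) (y := u - s) (p := a - 1) hs.le (by linarith) (by linarith) (by linarith)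
        simpa [show s + (u - s) = u by ring] using this
      nlinarith [mul_le_mul_of_nonneg_left hsub ha0.le]
  have hend := hmono (self_mem_Ici) (mem_Ici.mpr hst) hst
  have h0 : g s = 0 := by
    simp [hg, Real.zero_rpow (by linarith : a ≠ 0)]
  rw [h0] at hend
  simp only [hg] at hend
  linarith

/-- For `H ∈ (1/2,1)` and `T > 0`,
`sup_{0 < s < t ≤ T} φ(s,t)/(s^{2H−1}(t−s)) < ∞`. -/
theorem statement18 (H : ℝ) (hH : H ∈ Set.Ioo (1/2 : ℝ) 1) (T : ℝ) (hT : 0 < T) :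
    BddAbove {r : ℝ | ∃ s t : ℝ, 0 < s ∧ s < t ∧ t ≤ T ∧
      r = phiFn H s t / (s ^ (2*H-1) * (t - s))} := by
  obtain ⟨hH1, hH2⟩ := hH
  refine ⟨H, ?_⟩
  rintro r ⟨s, t, hs, hst, htT, rfl⟩
  have hkey := key_ineq (a := 2*H) (s := s) (t := t) (by linarith) (by linarith) hs hst.le
  have hden : 0 < s ^ (2*H-1) * (t - s) := by
    have : (0:ℝ) < s ^ (2*H-1) := Real.rpow_pos_of_pos hs _
    have : (0:ℝ) < t - s := by linarith
    positivity
  rw [div_le_iff₀ hden]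
  have h21 : 2*H - 1 = 2*H - 1 := rfl
  unfold phiFn
  rw [div_le_iff₀ (by norm_num : (0:ℝ) < 2)] at *
  have : 2*H * s ^ (2*H - 1) * (t - s) = H * (s ^ (2*H-1) * (t-s)) * 2 := by ring
  linarith [hkey, this ▸ hkey]
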